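/- Let S be a subring of a commutative ring R and I an ideal of S. A polynomial f ∈ (T_n(R))[x] satisfies f(C)_ℓ ∈ T_n(I) for all C ∈ T_n(S) (left substitution) if and only if for all 1 ≤ i ≤ j ≤ n, the scalar polynomial f_{ij} ∈ R[x] satisfies f_{ij}(C) ∈ T_i(I) for all C ∈ T_i(S). -/

import Mathlib

open Matrix Polynomial Finset

section aux
variable {R : Type*} [CommRing R] (S : Subring R) (I : Ideal S)

/-- entries realized by ideal elements -/
def memJ (x : R) : Prop := ∃ s ∈ I, (s : R) = x

lemma memJ_zero : memJ S I 0 := ⟨0, I.zero_mem, rfl⟩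

lemma memJ_add {x y : R} (hx : memJ S I x) (hy : memJ S I y) : memJ S I (x + y) := by
  obtain ⟨s, hs, rfl⟩ := hx; obtain ⟨t, ht, rfl⟩ := hy
  exact ⟨s + t, I.add_mem hs ht, by push_cast; ring⟩

lemma memJ_sub {x y : R} (hx : memJ S I x) (hy : memJ S I y) : memJ S I (x - y) := by
  obtain ⟨s, hs, rfl⟩ := hx; obtain ⟨t, ht, rfl⟩ := hy
  exact ⟨s - t, I.sub_mem hs ht, by push_cast; ring⟩

lemma memJ_sum {ι : Type*} (s : Finset ι) (g : ι → R) (h : ∀ i ∈ s, memJ S I (g i)) :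
    memJ S I (∑ i ∈ s, g i) := by
  classical
  induction s using Finset.induction_on with
  | empty => simpa using memJ_zero S I
  | insert _ _ hni ih =>
    rw [Finset.sum_insert hni]
    exact memJ_add S I (h _ (Finset.mem_insert_self _ _))
      (ih fun i hi => h i (Finset.mem_insert_of_mem hi))

lemma blockTriangular_pow {N : ℕ} (C : Matrix (Fin N) (Fin N) R)
    (h : C.BlockTriangular id) (k : ℕ) : (C ^ k).BlockTriangular id := by
  induction k with
  | zero => simpa using (Matrix.blockTriangular_one (b := (id : Fin N → Fin N)))
  | succ k ih => rw [pow_succ]; exact ih.mul h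

lemma pow_col_zero {N : ℕ} (C : Matrix (Fin N) (Fin N) R) {q : Fin N}
    (h : ∀ p, C p q = 0) {k : ℕ} (hk : k ≠ 0) (p : Fin N) : (C ^ k) p q = 0 := by
  obtain ⟨k', rfl⟩ := Nat.exists_eq_succ_of_ne_zero hk
  rw [pow_succ, Matrix.mul_apply]
  exact Finset.sum_eq_zero fun c _ => by rw [h c, mul_zero]

lemma submatrix_pow_castLE {n : ℕ} (C : Matrix (Fin n) (Fin n) R) (hC : C.BlockTriangular id)
    {m : ℕ} (h : m ≤ n) (k : ℕ) (a b : Fin m) :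
    ((C.submatrix (Fin.castLE h) (Fin.castLE h)) ^ k) a b
      = (C ^ k) (Fin.castLE h a) (Fin.castLE h b) := by
  induction k generalizing a b with
  | zero => simp [Matrix.one_apply, Fin.castLE_inj]
  | succ k ih =>
    rw [pow_succ, pow_succ, Matrix.mul_apply, Matrix.mul_apply]
    have hzero : ∀ c ∈ (Finset.univ : Finset (Fin n)),
        c ∉ (Finset.univ : Finset (Fin m)).map (Fin.castLEEmb h) →
        (C ^ k) (Fin.castLE h a) c * C c (Fin.castLE h b) = 0 := by
      intro c _ hc
      have hcm : ¬ (c : ℕ) < m := by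
        intro hcm
        exact hc (Finset.mem_map.2 ⟨⟨c, hcm⟩, Finset.mem_univ _, Fin.ext rfl⟩)
      have : C c (Fin.castLE h b) = 0 := hC (by simp [Fin.lt_def]; omega)
      rw [this, mul_zero]
    rw [← Finset.sum_subset (Finset.subset_univ _) hzero, Finset.sum_map]
    refine Finset.sum_congr rfl fun c _ => ?_
    rw [ih, Matrix.submatrix_apply]
    rfl

lemma sum_mul_apply {N : ℕ} (s : Finset ℕ) (C : Matrix (Fin N) (Fin N) R)
    (F : ℕ → Matrix (Fin N) (Fin N) R) (a b : Fin N) :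
    (∑ k ∈ s, C ^ k * F k) a b = ∑ m : Fin N, ∑ k ∈ s, (C ^ k) a m * (F k) m b := by
  rw [Matrix.sum_apply]
  simp_rw [Matrix.mul_apply]
  rw [Finset.sum_comm]

lemma aeval_entry {N : ℕ} (s : Finset ℕ) (c : ℕ → R) (C : Matrix (Fin N) (Fin N) R)
    (p q : Fin N) :
    (Polynomial.aeval C (∑ k ∈ s, Polynomial.C (c k) * Polynomial.X ^ k)) p q
      = ∑ k ∈ s, c k * (C ^ k) p q := by
  rw [map_sum, Matrix.sum_apply]
  refine Finset.sum_congr rfl fun k _ => ?_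
  rw [_root_.map_mul, Polynomial.aeval_C, map_pow, Polynomial.aeval_X, ← Algebra.smul_def,
    Matrix.smul_apply, smul_eq_mul]

lemma aeval_triangular {N : ℕ} (s : Finset ℕ) (c : ℕ → R) (C : Matrix (Fin N) (Fin N) R)
    (hC : C.BlockTriangular id) :
    (Polynomial.aeval C (∑ k ∈ s, Polynomial.C (c k) * Polynomial.X ^ k)).BlockTriangular id := by
  intro a b hab
  rw [aeval_entry]
  exact Finset.sum_eq_zero fun k _ => by rw [blockTriangular_pow C hC k hab, mul_zero]

end aux




section aux2
variable {R : Type*} [CommRing R]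

/-- Pad an `m × m` matrix to an `N × N` matrix by zeros (top-left placement). -/
def padM {m N : ℕ} (_h : m ≤ N) (E : Matrix (Fin m) (Fin m) R) : Matrix (Fin N) (Fin N) R :=
  fun p q => if hpq : (p : ℕ) < m ∧ (q : ℕ) < m then E ⟨p, hpq.1⟩ ⟨q, hpq.2⟩ else 0

lemma padM_triangular {m N : ℕ} (h : m ≤ N) (E : Matrix (Fin m) (Fin m) R)
    (hE : E.BlockTriangular id) : (padM h E).BlockTriangular id := by
  intro p q hpq
  unfold padM
  split
  · exact hE (by simp only [Fin.lt_def, id_eq] at hpq ⊢; omega)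
  · rfl

lemma padM_mem {m N : ℕ} (h : m ≤ N) (E : Matrix (Fin m) (Fin m) R) (S : Subring R)
    (hE : ∀ a b, E a b ∈ S) : ∀ p q, (padM h E) p q ∈ S := by
  intro p q
  unfold padM
  split
  · exact hE _ _
  · exact S.zero_mem

lemma padM_submatrix {m N : ℕ} (h : m ≤ N) (E : Matrix (Fin m) (Fin m) R) :
    (padM h E).submatrix (Fin.castLE h) (Fin.castLE h) = E := by
  ext a b
  simp only [Matrix.submatrix_apply, padM]
  rw [dif_pos ⟨a.isLt, b.isLt⟩]
  congr 1 <;> exact Fin.ext rfl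

lemma padM_col_zero {m N : ℕ} (h : m ≤ N) (E : Matrix (Fin m) (Fin m) R) {q : Fin N}
    (hq : m ≤ (q : ℕ)) (p : Fin N) : (padM h E) p q = 0 := by
  unfold padM
  rw [dif_neg (by omega)]

/-- Shift a matrix diagonally by `s`. -/
def shiftM {N : ℕ} (D : Matrix (Fin N) (Fin N) R) (s : ℕ) : Matrix (Fin N) (Fin N) R :=
  fun p q => if h : s ≤ (p : ℕ) ∧ s ≤ (q : ℕ) then
    D ⟨(p : ℕ) - s, lt_of_le_of_lt (Nat.sub_le _ _) p.isLt⟩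
      ⟨(q : ℕ) - s, lt_of_le_of_lt (Nat.sub_le _ _) q.isLt⟩ else 0

lemma shiftM_triangular {N : ℕ} (D : Matrix (Fin N) (Fin N) R) (s : ℕ)
    (hD : D.BlockTriangular id) : (shiftM D s).BlockTriangular id := by
  intro p q hpq
  unfold shiftM
  split
  · exact hD (by simp only [Fin.lt_def, id_eq] at hpq ⊢; omega)
  · rfl

lemma shiftM_mem {N : ℕ} (D : Matrix (Fin N) (Fin N) R) (s : ℕ) (S : Subring R)
    (hD : ∀ a b, D a b ∈ S) : ∀ p q, (shiftM D s) p q ∈ S := by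
  intro p q
  unfold shiftM
  split
  · exact hD _ _
  · exact S.zero_mem

lemma shiftM_pow {N : ℕ} (D : Matrix (Fin N) (Fin N) R) (hD : D.BlockTriangular id) (s : ℕ)
    (k : ℕ) : ∀ (u v : Fin N) (hu : (u : ℕ) + s < N) (hv : (v : ℕ) + s < N),
    ((shiftM D s) ^ k) ⟨(u : ℕ) + s, hu⟩ ⟨(v : ℕ) + s, hv⟩ = (D ^ k) u v := by
  induction k with
  | zero =>
    intro u v hu hv
    simp [Matrix.one_apply, Fin.ext_iff]
  | succ k ih =>
    intro u v hu hv
    rw [pow_succ, pow_succ, Matrix.mul_apply, Matrix.mul_apply]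
    rw [← Finset.sum_filter_of_ne (p := fun c : Fin N => s ≤ (c : ℕ))
      (by
        intro c _ hne
        by_contra hcs
        apply hne
        have h0 : shiftM D s c ⟨(v : ℕ) + s, hv⟩ = 0 := by
          unfold shiftM; rw [dif_neg (by omega)]
        rw [h0, mul_zero])]
    rw [← Finset.sum_filter_of_ne (s := (Finset.univ : Finset (Fin N)))
      (p := fun c : Fin N => (c : ℕ) + s < N)
      (f := fun c => (D ^ k) u c * D c v)
      (by
        intro c _ hne
        by_contra hcs
        apply hne
        show (D ^ k) u c * D c v = 0
        rw [hD (show id v < id c by simp only [Fin.lt_def, id_eq]; omega), mul_zero])]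
    refine Finset.sum_bij'
      (fun c _ => (⟨(c : ℕ) - s, lt_of_le_of_lt (Nat.sub_le _ _) c.isLt⟩ : Fin N))
      (fun c hc => (⟨(c : ℕ) + s,
        (Finset.mem_filter.mp hc).2⟩ : Fin N)) ?_ ?_ ?_ ?_ ?_
    · intro c hc
      simp only [Finset.mem_filter, Finset.mem_univ, true_and] at hc ⊢
      omega
    · intro c hc
      simp only [Finset.mem_filter, Finset.mem_univ, true_and] at hc ⊢
      omega
    · intro c hc
      simp only [Finset.mem_filter, Finset.mem_univ, true_and] at hc
      exact Fin.ext (by simp only []; omega)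
    · intro c hc
      exact Fin.ext (by simp only []; omega)
    · intro c hc
      simp only [Finset.mem_filter, Finset.mem_univ, true_and] at hc
      have h1 : ((shiftM D s) ^ k) ⟨(u : ℕ) + s, hu⟩ c
          = (D ^ k) u ⟨(c : ℕ) - s, lt_of_le_of_lt (Nat.sub_le _ _) c.isLt⟩ := by
        have h2 := ih u ⟨(c : ℕ) - s, lt_of_le_of_lt (Nat.sub_le _ _) c.isLt⟩ hu
          (by simp only []; omega)
        have h3 : (⟨((⟨(c : ℕ) - s, lt_of_le_of_lt (Nat.sub_le _ _) c.isLt⟩ : Fin N) : ℕ) + s,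
            by simp only []; omega⟩ : Fin N) = c := Fin.ext (by simp only []; omega)
        rwa [h3] at h2
      rw [h1]
      congr 1
      unfold shiftM
      rw [dif_pos ⟨hc, Nat.le_add_left s _⟩]
      congr 1
      exact Fin.ext (by simp)

end aux2
lemma submatrix_triangular {R : Type*} [CommRing R] {n m : ℕ} (C : Matrix (Fin n) (Fin n) R)
    (hC : C.BlockTriangular id) (h : m ≤ n) :
    (C.submatrix (Fin.castLE h) (Fin.castLE h)).BlockTriangular id := by
  intro p q hpq
  exact hC (by simp only [Fin.lt_def, id_eq, Fin.coe_castLE] at hpq ⊢; exact hpq)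

lemma forward_core {R : Type*} [CommRing R] (S : Subring R) (I : Ideal S) {n : ℕ}
    (f : Polynomial (Matrix (Fin n) (Fin n) R))
    (hf : ∀ k, (f.coeff k).BlockTriangular id)
    (H : ∀ C : Matrix (Fin n) (Fin n) R, C.BlockTriangular id → (∀ a b, C a b ∈ S) →
        ∀ a b : Fin n, ∃ s ∈ I, (s : R) = (∑ k ∈ f.support, C ^ k * f.coeff k) a b) :
    ∀ (iN : ℕ) (i j : Fin n), (i : ℕ) = iN → i ≤ j →
      ∀ D : Matrix (Fin ((i : ℕ) + 1)) (Fin ((i : ℕ) + 1)) R, D.BlockTriangular id →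
        (∀ a b, D a b ∈ S) →
        ∀ p q, memJ S I (∑ k ∈ f.support, f.coeff k i j * (D ^ k) p q) := by
  intro iN
  induction iN using Nat.strong_induction_on with
  | _ iN IH =>
  intro i j hiN hij D hDt hDS p q
  have hij' : (i : ℕ) ≤ (j : ℕ) := Fin.le_def.mp hij
  -- Step 1 : the column-`i` claim
  have col : ∀ (E : Matrix (Fin ((i : ℕ) + 1)) (Fin ((i : ℕ) + 1)) R), E.BlockTriangular id →
      (∀ a b, E a b ∈ S) → ∀ a : Fin ((i : ℕ) + 1),
      memJ S I (∑ k ∈ f.support, f.coeff k i j * (E ^ k) a ⟨(i : ℕ), Nat.lt_succ_self _⟩) := by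
    intro E hEt hES a
    have haa : (a : ℕ) < (i : ℕ) + 1 := a.isLt
    have hm : (i : ℕ) + 1 ≤ n := i.isLt
    set C : Matrix (Fin n) (Fin n) R := padM hm E with hC
    have hCt : C.BlockTriangular id := padM_triangular hm E hEt
    have hCS : ∀ p q, C p q ∈ S := padM_mem hm E S hES
    set A : Fin n := Fin.castLE hm a with hA
    have hsum : memJ S I (∑ m' : Fin n, ∑ k ∈ f.support, (C ^ k) A m' * (f.coeff k) m' j) := by
      have h1 := H C hCt hCS A j
      rwa [sum_mul_apply] at h1
    have hterm : ∀ m' : Fin n, m' ≠ i →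
        memJ S I (∑ k ∈ f.support, (C ^ k) A m' * (f.coeff k) m' j) := by
      intro m' hm'
      rcases lt_trichotomy (m' : ℕ) (i : ℕ) with hlt | heq | hgt
      · by_cases ham : (a : ℕ) ≤ (m' : ℕ)
        · have hm'n : (m' : ℕ) + 1 ≤ n := m'.isLt
          have hres := IH (m' : ℕ) (by omega) m' j rfl (Fin.le_def.mpr (by omega))
            (C.submatrix (Fin.castLE hm'n) (Fin.castLE hm'n))
            (submatrix_triangular C hCt hm'n) (fun _ _ => hCS _ _)
            ⟨(a : ℕ), by omega⟩ ⟨(m' : ℕ), Nat.lt_succ_self _⟩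
          have heqs : (∑ k ∈ f.support, (C ^ k) A m' * (f.coeff k) m' j)
              = ∑ k ∈ f.support, f.coeff k m' j *
                ((C.submatrix (Fin.castLE hm'n) (Fin.castLE hm'n)) ^ k)
                  ⟨(a : ℕ), by omega⟩ ⟨(m' : ℕ), Nat.lt_succ_self _⟩ := by
            refine Finset.sum_congr rfl fun k _ => ?_
            rw [submatrix_pow_castLE C hCt hm'n k]
            have e1 : Fin.castLE hm'n ⟨(a : ℕ), by omega⟩ = A := Fin.ext (by simp [hA])
            have e2 : Fin.castLE hm'n ⟨(m' : ℕ), Nat.lt_succ_self _⟩ = m' := Fin.ext (by simp)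
            rw [e1, e2, mul_comm]
          rw [heqs]
          exact hres
        · have hz : (∑ k ∈ f.support, (C ^ k) A m' * (f.coeff k) m' j) = 0 :=
            Finset.sum_eq_zero fun k _ => by
              rw [blockTriangular_pow C hCt k
                (show id m' < id A by simp only [Fin.lt_def, id_eq, hA, Fin.coe_castLE]; omega),
                zero_mul]
          rw [hz]; exact memJ_zero S I
      · exact absurd (Fin.ext heq) hm'
      · have hz : (∑ k ∈ f.support, (C ^ k) A m' * (f.coeff k) m' j) = 0 :=
          Finset.sum_eq_zero fun k _ => by
            rcases Nat.eq_zero_or_pos k with rfl | hk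
            · rw [pow_zero, Matrix.one_apply_ne
                (Fin.ne_of_val_ne (by simp only [hA, Fin.coe_castLE]; omega)), zero_mul]
            · rw [pow_col_zero C
                (fun p => padM_col_zero hm E (by omega) p) (Nat.pos_iff_ne_zero.mp hk) A,
                zero_mul]
        rw [hz]; exact memJ_zero S I
    have hkey : memJ S I (∑ k ∈ f.support, (C ^ k) A i * (f.coeff k) i j) := by
      have h1 : memJ S I (∑ m' ∈ Finset.univ.erase i,
          ∑ k ∈ f.support, (C ^ k) A m' * (f.coeff k) m' j) :=
        memJ_sum S I _ _ fun m' hm' => hterm m' (Finset.ne_of_mem_erase hm')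
      have h2 : (∑ k ∈ f.support, (C ^ k) A i * (f.coeff k) i j)
          = (∑ m' : Fin n, ∑ k ∈ f.support, (C ^ k) A m' * (f.coeff k) m' j)
            - ∑ m' ∈ Finset.univ.erase i, ∑ k ∈ f.support, (C ^ k) A m' * (f.coeff k) m' j := by
        rw [← Finset.add_sum_erase _ _ (Finset.mem_univ i)]
        ring
      rw [h2]
      exact memJ_sub S I hsum h1
    have heq2 : ∀ k : ℕ, (C ^ k) A i = (E ^ k) a ⟨(i : ℕ), Nat.lt_succ_self _⟩ := by
      intro k
      have h3 := submatrix_pow_castLE C hCt hm k a ⟨(i : ℕ), Nat.lt_succ_self _⟩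
      rw [show C.submatrix (Fin.castLE hm) (Fin.castLE hm) = E from padM_submatrix hm E] at h3
      rw [h3]
      congr 1
    have heqs2 : (∑ k ∈ f.support, f.coeff k i j * (E ^ k) a ⟨(i : ℕ), Nat.lt_succ_self _⟩)
        = ∑ k ∈ f.support, (C ^ k) A i * (f.coeff k) i j :=
      Finset.sum_congr rfl fun k _ => by rw [← heq2 k, mul_comm]
    rw [heqs2]
    exact hkey
  -- Step 2 : arbitrary entries via shifting
  by_cases hpq : (q : ℕ) < (p : ℕ)
  · have hz : (∑ k ∈ f.support, f.coeff k i j * (D ^ k) p q) = 0 :=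
      Finset.sum_eq_zero fun k _ => by
        rw [blockTriangular_pow D hDt k
          (show id q < id p by simp only [Fin.lt_def, id_eq]; omega), mul_zero]
    rw [hz]; exact memJ_zero S I
  · push_neg at hpq
    have hq : (q : ℕ) ≤ (i : ℕ) := Nat.lt_succ_iff.mp q.isLt
    have hPs : (p : ℕ) + ((i : ℕ) - (q : ℕ)) < (i : ℕ) + 1 := by omega
    have hres := col (shiftM D ((i : ℕ) - (q : ℕ)))
      (shiftM_triangular D _ hDt) (shiftM_mem D _ S hDS)
      ⟨(p : ℕ) + ((i : ℕ) - (q : ℕ)), hPs⟩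
    have hkeq : ∀ k : ℕ, ((shiftM D ((i : ℕ) - (q : ℕ))) ^ k)
        ⟨(p : ℕ) + ((i : ℕ) - (q : ℕ)), hPs⟩ ⟨(i : ℕ), Nat.lt_succ_self _⟩ = (D ^ k) p q := by
      intro k
      have h4 := shiftM_pow D hDt ((i : ℕ) - (q : ℕ)) k p q (by omega) (by omega)
      convert h4 using 2
      exact Fin.ext (by simp only []; omega)
    have heqs3 : (∑ k ∈ f.support, f.coeff k i j * (D ^ k) p q)
        = ∑ k ∈ f.support, f.coeff k i j * ((shiftM D ((i : ℕ) - (q : ℕ))) ^ k)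
            ⟨(p : ℕ) + ((i : ℕ) - (q : ℕ)), hPs⟩ ⟨(i : ℕ), Nat.lt_succ_self _⟩ :=
      Finset.sum_congr rfl fun k _ => by rw [hkeq k]
    rw [heqs3]
    exact hres

/-- `f ∈ (Tₙ(R))[x]` maps `Tₙ(S)` into `Tₙ(I)` under left substitution iff for all
`1 ≤ i ≤ j ≤ n` the scalar polynomial `f_{ij}` maps `T_i(S)` into `T_i(I)`.
(With 0-indexed `i : Fin n` the size `i` becomes `i + 1`.) -/
theorem stmt14 (n : ℕ) (R : Type*) [CommRing R] (S : Subring R) (I : Ideal S)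
    (f : Polynomial (Matrix (Fin n) (Fin n) R))
    (hf : ∀ k, (f.coeff k).BlockTriangular id) :
    (∀ C : Matrix (Fin n) (Fin n) R, C.BlockTriangular id → (∀ a b, C a b ∈ S) →
        ((∑ k ∈ f.support, C ^ k * f.coeff k)).BlockTriangular id ∧
          ∀ a b : Fin n, ∃ s ∈ I, (s : R) = (∑ k ∈ f.support, C ^ k * f.coeff k) a b)
    ↔ ∀ i j : Fin n, i ≤ j →
        ∀ C : Matrix (Fin ((i : ℕ) + 1)) (Fin ((i : ℕ) + 1)) R, C.BlockTriangular id →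
          (∀ a b, C a b ∈ S) →
          (Polynomial.aeval C
              (∑ k ∈ f.support, Polynomial.C (f.coeff k i j) * Polynomial.X ^ k)).BlockTriangular id ∧
            ∀ a b, ∃ s ∈ I, (s : R) =
              (Polynomial.aeval C
                (∑ k ∈ f.support, Polynomial.C (f.coeff k i j) * Polynomial.X ^ k)) a b := by
  constructor
  · -- forward
    intro H1 i j hij C' hC't hC'S
    refine ⟨aeval_triangular _ _ _ hC't, ?_⟩
    intro a b
    show memJ S I _
    rw [aeval_entry]
    exact forward_core S I f hf (fun C hCt hCS => (H1 C hCt hCS).2) (i : ℕ) i j rfl hij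
      C' hC't hC'S a b
  · -- backward
    intro H2 C hCt hCS
    refine ⟨?_, ?_⟩
    · intro a b hab
      rw [Matrix.sum_apply]
      exact Finset.sum_eq_zero fun k _ => ((blockTriangular_pow C hCt k).mul (hf k)) hab
    · intro a b
      show memJ S I _
      rw [sum_mul_apply]
      refine memJ_sum S I _ _ fun m' _ => ?_
      by_cases h1 : (m' : ℕ) < (a : ℕ)
      · have hz : (∑ k ∈ f.support, (C ^ k) a m' * (f.coeff k) m' b) = 0 :=
          Finset.sum_eq_zero fun k _ => by
            rw [blockTriangular_pow C hCt k
              (show id m' < id a by simp only [Fin.lt_def, id_eq]; omega), zero_mul]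
        rw [hz]; exact memJ_zero S I
      · by_cases h2 : (b : ℕ) < (m' : ℕ)
        · have hz : (∑ k ∈ f.support, (C ^ k) a m' * (f.coeff k) m' b) = 0 :=
            Finset.sum_eq_zero fun k _ => by
              rw [hf k (show id b < id m' by simp only [Fin.lt_def, id_eq]; omega), mul_zero]
          rw [hz]; exact memJ_zero S I
        · have hm'n : (m' : ℕ) + 1 ≤ n := m'.isLt
          have hres := (H2 m' b (Fin.le_def.mpr (by omega))
            (C.submatrix (Fin.castLE hm'n) (Fin.castLE hm'n))
            (submatrix_triangular C hCt hm'n) (fun _ _ => hCS _ _)).2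
            ⟨(a : ℕ), by omega⟩ ⟨(m' : ℕ), Nat.lt_succ_self _⟩
          rw [aeval_entry] at hres
          have heqs : (∑ k ∈ f.support, (C ^ k) a m' * (f.coeff k) m' b)
              = ∑ k ∈ f.support, f.coeff k m' b *
                ((C.submatrix (Fin.castLE hm'n) (Fin.castLE hm'n)) ^ k)
                  ⟨(a : ℕ), by omega⟩ ⟨(m' : ℕ), Nat.lt_succ_self _⟩ := by
            refine Finset.sum_congr rfl fun k _ => ?_
            rw [submatrix_pow_castLE C hCt hm'n k]
            have e1 : Fin.castLE hm'n ⟨(a : ℕ), by omega⟩ = a := Fin.ext (by simp)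
            have e2 : Fin.castLE hm'n ⟨(m' : ℕ), Nat.lt_succ_self _⟩ = m' := Fin.ext (by simp)
            rw [e1, e2, mul_comm]
          rw [heqs]
          exact hres
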